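/- arXiv:1505.01644 — 2 statements merged into one kernel-verified Lean document; each statement's English description precedes it below -/
import Mathlib

section
/- Let λ₁, λ₂, λ₃, λ₄ and v₁, v₂, v₃, v₄ be real numbers satisfying the system (λ₁−λ₂)v₁v₂ + (λ₃−λ₄)v₃v₄ = 0, (λ₁−λ₃)v₁v₃ + (λ₄−λ₂)v₄v₂ = 0, (λ₁−λ₄)v₁v₄ + (λ₂−λ₃)v₂v₃ = 0. If all vⱼ are nonzero, then λ₁ = λ₂ = λ₃ = λ₄. -/
/-- if the three CPE equations hold and all `vⱼ` are nonzero,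
then `λ₁ = λ₂ = λ₃ = λ₄`. -/
theorem eigenvalues_all_equal (l1 l2 l3 l4 v1 v2 v3 v4 : ℝ)
    (h1 : (l1 - l2) * v1 * v2 + (l3 - l4) * v3 * v4 = 0)
    (h2 : (l1 - l3) * v1 * v3 + (l4 - l2) * v4 * v2 = 0)
    (h3 : (l1 - l4) * v1 * v4 + (l2 - l3) * v2 * v3 = 0)
    (hv1 : v1 ≠ 0) (hv2 : v2 ≠ 0) (hv3 : v3 ≠ 0) (hv4 : v4 ≠ 0) :
    l1 = l2 ∧ l2 = l3 ∧ l3 = l4 := by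
  have hD : v1 * v2 * v3 * v4 * (v1 ^ 2 + v2 ^ 2 + v3 ^ 2 + v4 ^ 2) ≠ 0 := by
    have hs : v1 ^ 2 + v2 ^ 2 + v3 ^ 2 + v4 ^ 2 > 0 := by positivity
    have := mul_ne_zero (mul_ne_zero (mul_ne_zero hv1 hv2) hv3) hv4
    exact mul_ne_zero this (ne_of_gt hs)
  have k1 : (l1 - l2) * (v1 * v2 * v3 * v4 * (v1 ^ 2 + v2 ^ 2 + v3 ^ 2 + v4 ^ 2)) = 0 := by
    linear_combination (v3 * v4 * (v1 ^ 2 + v2 ^ 2)) * h1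
      + (v3 * v4 * (v1 * v4 + v2 * v3)) * h2
      + (v3 * v4 * (v2 * v4 - v1 * v3)) * h3
  have k2 : (l2 - l3) * (v1 * v2 * v3 * v4 * (v1 ^ 2 + v2 ^ 2 + v3 ^ 2 + v4 ^ 2)) = 0 := by
    linear_combination (-(v1 * v4) * (v1 * v3 + v2 * v4)) * h1
      + (v1 * v4 * (v1 * v2 - v3 * v4)) * h2
      + (v1 * v2 * v2 * v4 + v3 * v4 * v1 * v3) * h3
  have k3 : (l3 - l4) * (v1 * v2 * v3 * v4 * (v1 ^ 2 + v2 ^ 2 + v3 ^ 2 + v4 ^ 2)) = 0 := by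
    linear_combination (v1 * v3 * v2 * v3 + v1 * v4 * v2 * v4) * h1
      + (-(v1 * v2) * (v1 * v4 + v2 * v3)) * h2
      + (v1 * v2 * (v1 * v3 - v2 * v4)) * h3
  have e1 : l1 - l2 = 0 := by
    rcases mul_eq_zero.mp k1 with h | h
    · exact h
    · exact absurd h hD
  have e2 : l2 - l3 = 0 := by
    rcases mul_eq_zero.mp k2 with h | h
    · exact h
    · exact absurd h hD
  have e3 : l3 - l4 = 0 := by
    rcases mul_eq_zero.mp k3 with h | h
    · exact h
    · exact absurd h hD
  exact ⟨by linarith, by linarith, by linarith⟩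
end

section
/- Let (M⁴, g, f) be a 4-dimensional CPE metric with constant scalar curvature and δW⁺ = 0. Then in an orthonormal frame, 4(1+f)·δW⁺_{jkl} = W_{kljs}∇^s f + W_{k̄ l̄ j s}∇^s f + T_{lkj} + T_{l̄ k̄ j}, and consequently W_{kljs}∇^s f + W_{k̄ l̄ j s}∇^s f = −(T_{klj} + T_{k̄ l̄ j}) at points where 1+f ≠ 0 ... and contracting with ∇^j f yields (T_{ijk} + T_{ī j̄ k})∇^k f = 0. -/
/-- `(k', l')` is the dual index pair of `(k, l)`: `(k, l, k', l')` is an even permutation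
of `(0, 1, 2, 3)` (0-based indices; dual pairs `(0,1)↔(2,3)`, `(0,2)↔(3,1)`,
`(0,3)↔(1,2)`). -/
def IsDualPair (k l k' l' : Fin 4) : Prop :=
  (k, l, k', l') ∈ ({(0, 1, 2, 3), (1, 0, 3, 2), (2, 3, 0, 1), (3, 2, 1, 0),
    (0, 2, 3, 1), (2, 0, 1, 3), (3, 1, 0, 2), (1, 3, 2, 0),
    (0, 3, 1, 2), (3, 0, 2, 1), (1, 2, 0, 3), (2, 1, 3, 0)} :
    Set (Fin 4 × Fin 4 × Fin 4 × Fin 4))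

/-- components at a point, orthonormal frame, 0-based indices: for a
4-dimensional CPE metric (CPE identity `(f+1)C_ijk = W_ijks∇^sf + T_ijk`, constant scalar
curvature so that `4δW⁺_jkl = (∇_kR_jl - ∇_lR_jk) + (∇_k̄R_jl̄ - ∇_l̄R_jk̄)`) with
`δW⁺ = 0`, one has
`4(1+f)δW⁺_jkl = W_kljs∇^sf + W_k̄l̄js∇^sf + T_klj + T_k̄l̄j`, consequently
`W_kljs∇^sf + W_k̄l̄js∇^sf = -(T_klj + T_k̄l̄j)`, and contracting with `∇^jf` yields
`(T_ijk + T_īj̄k)∇^kf = 0` (using the antisymmetry of `W` in its last pair of slots). -/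
theorem cpe_deltaWplus_contraction (f : ℝ) (v : Fin 4 → ℝ)
    (W : Fin 4 → Fin 4 → Fin 4 → Fin 4 → ℝ)
    (T C δW DRic : Fin 4 → Fin 4 → Fin 4 → ℝ)
    (hDRicSymm : ∀ a b c, DRic a b c = DRic a c b)
    (hCdef : ∀ k l j, C k l j = DRic k l j - DRic l k j)
    (hδ : ∀ j k l k' l', IsDualPair k l k' l' →
      4 * δW j k l = (DRic k j l - DRic l j k) + (DRic k' j l' - DRic l' j k'))
    (hCPE : ∀ i j k, (f + 1) * C i j k = (∑ s, W i j k s * v s) + T i j k)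
    (hWanti : ∀ k l j s, W k l j s = -W k l s j)
    (hharm : ∀ j k l, δW j k l = 0) :
    (∀ j k l k' l', IsDualPair k l k' l' →
      4 * (1 + f) * δW j k l =
        (∑ s, W k l j s * v s) + (∑ s, W k' l' j s * v s) + T k l j + T k' l' j) ∧
    (∀ j k l k' l', IsDualPair k l k' l' →
      (∑ s, W k l j s * v s) + (∑ s, W k' l' j s * v s) = -(T k l j + T k' l' j)) ∧
    (∀ i j i' j', IsDualPair i j i' j' → ∑ k, (T i j k + T i' j' k) * v k = 0) := by
  have part1 : ∀ j k l k' l', IsDualPair k l k' l' →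
      4 * (1 + f) * δW j k l =
        (∑ s, W k l j s * v s) + (∑ s, W k' l' j s * v s) + T k l j + T k' l' j := by
    intro j k l k' l' hp
    have h := hδ j k l k' l' hp
    rw [hDRicSymm k j l, hDRicSymm l j k, hDRicSymm k' j l', hDRicSymm l' j k',
      ← hCdef k l j, ← hCdef k' l' j] at h
    linear_combination (1 + f) * h + hCPE k l j + hCPE k' l' j
  have part2 : ∀ j k l k' l', IsDualPair k l k' l' →
      (∑ s, W k l j s * v s) + (∑ s, W k' l' j s * v s) = -(T k l j + T k' l' j) := by
    intro j k l k' l' hp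
    have h := part1 j k l k' l' hp
    rw [hharm] at h
    linarith
  refine ⟨part1, part2, ?_⟩
  intro i j i' j' hp
  have h0 : ∀ a b : Fin 4, ∑ k, (∑ s, W a b k s * v s) * v k = 0 := by
    intro a b
    simp only [Fin.sum_univ_four]
    linear_combination (v 0 * v 0 / 2) * hWanti a b 0 0 + (v 1 * v 1 / 2) * hWanti a b 1 1
      + (v 2 * v 2 / 2) * hWanti a b 2 2 + (v 3 * v 3 / 2) * hWanti a b 3 3
      + (v 0 * v 1) * hWanti a b 0 1 + (v 0 * v 2) * hWanti a b 0 2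
      + (v 0 * v 3) * hWanti a b 0 3 + (v 1 * v 2) * hWanti a b 1 2
      + (v 1 * v 3) * hWanti a b 1 3 + (v 2 * v 3) * hWanti a b 2 3
  have e0 := part2 0 i j i' j' hp
  have e1 := part2 1 i j i' j' hp
  have e2 := part2 2 i j i' j' hp
  have e3 := part2 3 i j i' j' hp
  have g0 := h0 i j
  have g1 := h0 i' j'
  simp only [Fin.sum_univ_four] at e0 e1 e2 e3 g0 g1 ⊢
  linear_combination v 0 * e0 + v 1 * e1 + v 2 * e2 + v 3 * e3 - g0 - g1
end
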